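/- Let a_k > 0, Γ_k > 0 be sequences with Γ_1 = 1 and Γ_k = (1-γ_k)Γ_{k-1} for k ≥ 2, where γ_1 = 1 and γ_k ∈ (0,1) for k ≥ 2. Suppose a sequence of real numbers Δ_k (k ≥ 0) and nonnegative reals D_k satisfy Δ_k + c_k D_k ≤ (1-γ_k)Δ_{k-1} + b_k D_{k-1} + δ_k for all k ≥ 1, with b_k, c_k, δ_k ≥ 0 and the compatibility condition b_k/Γ_k ≤ c_{k-1}/Γ_{k-1} for all k ≥ 2. Then for every K ≥ 1: Δ_K + c_K D_K ≤ Γ_K [b_1 D_0 + Σ_{k=1}^K δ_k/Γ_k]. -/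

import Mathlib

/-- Abstract telescoping argument behind the global convergence of the catalyst
scheme (Proposition 2.2). -/
theorem catalyst_telescoping
    (γ Γ Δ D b c δ : ℕ → ℝ)
    (hγ1 : γ 1 = 1) (hγ : ∀ k, 2 ≤ k → γ k ∈ Set.Ioo (0:ℝ) 1)
    (hΓpos : ∀ k, 1 ≤ k → 0 < Γ k)
    (hΓ1 : Γ 1 = 1) (hΓ : ∀ k, 2 ≤ k → Γ k = (1 - γ k) * Γ (k - 1))
    (hD : ∀ k, 0 ≤ D k) (hb : ∀ k, 0 ≤ b k) (hc : ∀ k, 0 ≤ c k)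
    (hδ : ∀ k, 0 ≤ δ k)
    (hrec : ∀ k, 1 ≤ k →
      Δ k + c k * D k ≤ (1 - γ k) * Δ (k - 1) + b k * D (k - 1) + δ k)
    (hcompat : ∀ k, 2 ≤ k → b k / Γ k ≤ c (k - 1) / Γ (k - 1)) :
    ∀ K, 1 ≤ K →
      Δ K + c K * D K ≤ Γ K * (b 1 * D 0 + ∑ k ∈ Finset.Icc 1 K, δ k / Γ k) := by
  intro K hK
  induction K with
  | zero => omega
  | succ n ih =>
    rcases Nat.eq_or_lt_of_le hK with h1 | h1
    · -- base case n+1 = 1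
      have hn : n = 0 := by omega
      subst hn
      have h := hrec 1 (le_refl 1)
      simp only [hγ1, hΓ1, show (1:ℕ) - 1 = 0 from rfl] at h ⊢
      simp only [Finset.Icc_self, Finset.sum_singleton, hΓ1]
      linarith
    · -- inductive step: n ≥ 1
      have hn : 1 ≤ n := by omega
      have ihn := ih hn
      have h2 : 2 ≤ n + 1 := by omega
      have hΓn : 0 < Γ n := hΓpos n hn
      have hΓn1 : 0 < Γ (n+1) := hΓpos (n+1) (by omega)
      have hrecn := hrec (n+1) (by omega)
      have hΓeq := hΓ (n+1) h2
      simp only [Nat.add_sub_cancel] at hrecn hΓeq hrecn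
      have hcomp := hcompat (n+1) h2
      simp only [Nat.add_sub_cancel] at hcomp
      have hb' : b (n+1) ≤ Γ (n+1) * c n / Γ n := by
        rw [div_le_div_iff₀ hΓn1 hΓn] at hcomp
        rw [le_div_iff₀ hΓn]
        linarith
      have key : Δ (n+1) + c (n+1) * D (n+1)
          ≤ (Γ (n+1) / Γ n) * (Δ n + c n * D n) + δ (n+1) := by
        have h1γ : 1 - γ (n+1) = Γ (n+1) / Γ n := by
          field_simp [hΓeq]; linarith
        have hbD : b (n+1) * D n ≤ (Γ (n+1) * c n / Γ n) * D n :=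
          mul_le_mul_of_nonneg_right hb' (hD n)
        calc Δ (n+1) + c (n+1) * D (n+1)
            ≤ (1 - γ (n+1)) * Δ n + b (n+1) * D n + δ (n+1) := hrecn
          _ ≤ (Γ (n+1) / Γ n) * Δ n + (Γ (n+1) * c n / Γ n) * D n + δ (n+1) := by
              rw [h1γ]; linarith
          _ = (Γ (n+1) / Γ n) * (Δ n + c n * D n) + δ (n+1) := by ring
      have step : (Γ (n+1) / Γ n) * (Δ n + c n * D n)
          ≤ (Γ (n+1) / Γ n) * (Γ n * (b 1 * D 0 + ∑ k ∈ Finset.Icc 1 n, δ k / Γ k)) :=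
        mul_le_mul_of_nonneg_left ihn (le_of_lt (div_pos hΓn1 hΓn))
      have hsum : ∑ k ∈ Finset.Icc 1 (n+1), δ k / Γ k
          = (∑ k ∈ Finset.Icc 1 n, δ k / Γ k) + δ (n+1) / Γ (n+1) := by
        rw [Finset.sum_Icc_succ_top (by omega)]
      calc Δ (n+1) + c (n+1) * D (n+1)
          ≤ (Γ (n+1) / Γ n) * (Γ n * (b 1 * D 0 + ∑ k ∈ Finset.Icc 1 n, δ k / Γ k)) + δ (n+1) :=
            le_trans key (by linarith)
        _ = Γ (n+1) * (b 1 * D 0 + (∑ k ∈ Finset.Icc 1 n, δ k / Γ k) + δ (n+1) / Γ (n+1)) := by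
            field_simp
        _ = Γ (n+1) * (b 1 * D 0 + ∑ k ∈ Finset.Icc 1 (n+1), δ k / Γ k) := by
            rw [hsum]; ring
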